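/- Let Z be a ψ-irreducible linear Markov switching model on X = ℝ^d. Suppose: (i) there exist a set C ⊂ Y and ε > 0 such that for all x ∈ B(0,ε), h_i(x) > 0 if and only if i ∈ C, and the sub-stochastic matrix (p_{ij})_{i,j∈C} is primitive; and (ii) with Y_C := {i ∈ Y : p_{ij} > 0 for some j ∈ C}, there exists i₀ ∈ Y_C such that (0, i₀) lies in the support of ψ. Then Z satisfies assumptions A1 and A2. -/

import Mathlib

open MeasureTheory ProbabilityTheory ENNReal

namespace PMMPaper

/-! ### General Markov chain notions (general state space) -/

section Kernels

variable {S : Type*} [MeasurableSpace S]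

open Classical in
/-- `kpow κ k` is the `k`-step transition kernel of a Markov chain with one-step kernel `κ`. -/
noncomputable def kpow (κ : Kernel S S) : ℕ → Kernel S S
  | 0 => Kernel.id
  | n + 1 => kpow κ n ∘ₖ κ

/-- `φ` is an irreducibility measure for the chain with kernel `κ`:
`φ(A) > 0` implies that from every point `z` some `k`-step transition reaches `A`
with positive probability. -/
def IsIrreducibilityMeasure (κ : Kernel S S) (φ : Measure S) : Prop :=
  ∀ A : Set S, MeasurableSet A → 0 < φ A → ∀ z : S, ∃ k : ℕ, 1 ≤ k ∧ 0 < kpow κ k z A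

/-- `ψ` is a maximal irreducibility measure: a σ-finite irreducibility measure dominating
every other σ-finite irreducibility measure. -/
def IsMaxIrreducibilityMeasure (κ : Kernel S S) (ψ : Measure S) : Prop :=
  SigmaFinite ψ ∧ IsIrreducibilityMeasure κ ψ ∧
    ∀ φ : Measure S, SigmaFinite φ → IsIrreducibilityMeasure κ φ → φ ≪ ψ

/-- `Pz` is the family of laws (on the path space `ℕ → S`) of the Markov chain with
transition kernel `κ` started at the point `z`:  `Pz z` is a probability measure under which
the coordinate process starts at `z` and is Markov with kernel `κ`. -/
def IsMarkovFamily (κ : Kernel S S) (Pz : S → Measure (ℕ → S)) : Prop :=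
  (∀ z : S, IsProbabilityMeasure (Pz z)) ∧
  (∀ z : S, Pz z {ω | ω 0 = z} = 1) ∧
  ∀ (z : S) (n : ℕ) (g : S → ℝ≥0∞), Measurable g → ∀ C : Set (ℕ → S),
    MeasurableSet[⨆ i ∈ Set.Iic n, MeasurableSpace.comap (fun ω : ℕ → S => ω i) inferInstance] C →
    ∫⁻ ω in C, g (ω (n + 1)) ∂(Pz z) = ∫⁻ ω in C, ∫⁻ z', g z' ∂(κ (ω n)) ∂(Pz z)

/-- Harris recurrence property (relative to the measure `ψ`): every set charged by `ψ` is
visited infinitely often, almost surely, from every starting point. -/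
def HarrisProp (κ : Kernel S S) (Pz : S → Measure (ℕ → S)) (ψ : Measure S) : Prop :=
  ∀ A : Set S, MeasurableSet A → 0 < ψ A → ∀ z : S,
    Pz z {ω | ∀ N : ℕ, ∃ k : ℕ, N ≤ k ∧ ω k ∈ A} = 1

/-- `π` is an invariant measure for the kernel `κ`. -/
def IsInvariantMeasure (κ : Kernel S S) (π : Measure S) : Prop :=
  π.bind (fun z => κ z) = π

/-- The chain is positive: its transition kernel admits an invariant probability measure. -/
def IsPositive (κ : Kernel S S) : Prop :=
  ∃ π : Measure S, IsProbabilityMeasure π ∧ IsInvariantMeasure κ π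

/-- The process `Z` on `(Ω, P)` is a homogeneous Markov chain with transition kernel `κ`. -/
def IsMarkovChain {Ω : Type*} [MeasurableSpace Ω] (P : Measure Ω) (Z : ℕ → Ω → S)
    (κ : Kernel S S) : Prop :=
  (∀ k : ℕ, Measurable (Z k)) ∧
  ∀ (n : ℕ) (g : S → ℝ≥0∞), Measurable g → ∀ C : Set Ω,
    MeasurableSet[⨆ i ∈ Set.Iic n, MeasurableSpace.comap (Z i) inferInstance] C →
    ∫⁻ ω in C, g (Z (n + 1) ω) ∂P = ∫⁻ ω in C, ∫⁻ z', g z' ∂(κ (Z n ω)) ∂P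

/-- The process `Z : ℤ → Ω → S` on `(Ω, P)` is a (two-sided) homogeneous Markov chain
with transition kernel `κ`. -/
def IsMarkovChainZ {Ω : Type*} [MeasurableSpace Ω] (P : Measure Ω) (Z : ℤ → Ω → S)
    (κ : Kernel S S) : Prop :=
  (∀ k : ℤ, Measurable (Z k)) ∧
  ∀ (n : ℤ) (g : S → ℝ≥0∞), Measurable g → ∀ C : Set Ω,
    MeasurableSet[⨆ i ∈ Set.Iic n, MeasurableSpace.comap (Z i) inferInstance] C →
    ∫⁻ ω in C, g (Z (n + 1) ω) ∂P = ∫⁻ ω in C, ∫⁻ z', g z' ∂(κ (Z n ω)) ∂P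

/-- The reversed-time process of the two-sided chain `Z` is a Markov chain with kernel `κ'`. -/
def IsRevMarkovChainZ {Ω : Type*} [MeasurableSpace Ω] (P : Measure Ω) (Z : ℤ → Ω → S)
    (κ' : Kernel S S) : Prop :=
  ∀ (n : ℤ) (g : S → ℝ≥0∞), Measurable g → ∀ C : Set Ω,
    MeasurableSet[⨆ i ∈ Set.Ici n, MeasurableSpace.comap (Z i) inferInstance] C →
    ∫⁻ ω in C, g (Z (n - 1) ω) ∂P = ∫⁻ ω in C, ∫⁻ z', g z' ∂(κ' (Z n ω)) ∂P

/-- The two-sided process `Z` is stationary: all finite-dimensional distributions are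
invariant under time shifts. -/
def IsStationaryZ {Ω : Type*} [MeasurableSpace Ω] (P : Measure Ω) (Z : ℤ → Ω → S) : Prop :=
  ∀ (k : ℤ) (n : ℕ),
    P.map (fun ω => fun i : Fin n => Z (k + (i : ℕ)) ω) =
      P.map (fun ω => fun i : Fin n => Z ((i : ℕ) : ℤ) ω)

/-- First-coordinate projection `A_(1)` of a set of finite strings. -/
def proj1 {α : Type*} {R : ℕ} (A : Set (Fin (R + 1) → α)) : Set α :=
  (fun x => x 0) '' A

/-- The section `A(a) = {x_{2:r} : (a, x_{2:r}) ∈ A}`. -/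
def secSet {α : Type*} {R : ℕ} (A : Set (Fin (R + 1) → α)) (a : α) : Set (Fin R → α) :=
  {xr | Fin.cons a xr ∈ A}

end Kernels

/-! ### Pairwise Markov models -/

variable {𝓧 : Type*} [MeasurableSpace 𝓧] {𝓨 : Type*} [Fintype 𝓨] [DecidableEq 𝓨]
  [MeasurableSpace 𝓨] [MeasurableSingletonClass 𝓨] [Nonempty 𝓨]
  {Ω : Type*} [MeasurableSpace Ω]

/-- `Z` is a pairwise Markov model on `(Ω, P)`: a homogeneous Markov chain on `𝓧 × 𝓨`
whose transition kernel `κ` has density `q(z'|z)` with respect to `μ × count`, and whose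
initial distribution has density `p0` with respect to `μ × count`. -/
def IsPMM (P : Measure Ω) (Z : ℕ → Ω → 𝓧 × 𝓨) (κ : Kernel (𝓧 × 𝓨) (𝓧 × 𝓨))
    (μ : Measure 𝓧) (q : 𝓧 × 𝓨 → 𝓧 × 𝓨 → ℝ≥0∞) (p0 : 𝓧 × 𝓨 → ℝ≥0∞) : Prop :=
  IsProbabilityMeasure P ∧ IsMarkovChain P Z κ ∧ SigmaFinite μ ∧
  Measurable (Function.uncurry q) ∧ Measurable p0 ∧
  (∀ z : 𝓧 × 𝓨, (κ z : Measure (𝓧 × 𝓨)) =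
      (μ.prod Measure.count).withDensity (fun z' => q z' z)) ∧
  P.map (Z 0) = (μ.prod Measure.count).withDensity p0

/-- Two-sided version of `IsPMM`. -/
def IsPMMZ (P : Measure Ω) (Z : ℤ → Ω → 𝓧 × 𝓨) (κ : Kernel (𝓧 × 𝓨) (𝓧 × 𝓨))
    (μ : Measure 𝓧) (q : 𝓧 × 𝓨 → 𝓧 × 𝓨 → ℝ≥0∞) (p0 : 𝓧 × 𝓨 → ℝ≥0∞) : Prop :=
  IsProbabilityMeasure P ∧ IsMarkovChainZ P Z κ ∧ SigmaFinite μ ∧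
  Measurable (Function.uncurry q) ∧ Measurable p0 ∧
  (∀ z : 𝓧 × 𝓨, (κ z : Measure (𝓧 × 𝓨)) =
      (μ.prod Measure.count).withDensity (fun z' => q z' z)) ∧
  P.map (Z 0) = (μ.prod Measure.count).withDensity p0

/-- `pijD q x i j` is the conditional density
`p_{ij}(x_{1:r}) = p(x_{2:r}, y_r = j | x_1, y_1 = i)` (a string `x` of length `R+1`). -/
noncomputable def pijD (q : 𝓧 × 𝓨 → 𝓧 × 𝓨 → ℝ≥0∞) {R : ℕ} (x : Fin (R + 1) → 𝓧)
    (i j : 𝓨) : ℝ≥0∞ :=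
  ∑ y : Fin (R + 1) → 𝓨,
    (if y 0 = i ∧ y (Fin.last R) = j then
      ∏ k : Fin R, q (x k.succ, y k.succ) (x k.castSucc, y k.castSucc) else 0)

/-- `pmidD q x i t j` is the density `p(y_{t+1} = j, x_{2:r} | x_1, y_1 = i)`. -/
noncomputable def pmidD (q : 𝓧 × 𝓨 → 𝓧 × 𝓨 → ℝ≥0∞) {R : ℕ} (x : Fin (R + 1) → 𝓧)
    (i : 𝓨) (t : Fin (R + 1)) (j : 𝓨) : ℝ≥0∞ :=
  ∑ y : Fin (R + 1) → 𝓨,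
    (if y 0 = i ∧ y t = j then
      ∏ k : Fin R, q (x k.succ, y k.succ) (x k.castSucc, y k.castSucc) else 0)

/-- `pxD q x i = p(x_{2:r} | x_1, y_1 = i)`. -/
noncomputable def pxD (q : 𝓧 × 𝓨 → 𝓧 × 𝓨 → ℝ≥0∞) {R : ℕ} (x : Fin (R + 1) → 𝓧)
    (i : 𝓨) : ℝ≥0∞ :=
  ∑ j : 𝓨, pijD q x i j

/-- The set `Y⁺(x_{1:r}) = {(i,j) : p_{ij}(x_{1:r}) > 0}`. -/
def Yplus (q : 𝓧 × 𝓨 → 𝓧 × 𝓨 → ℝ≥0∞) {R : ℕ} (x : Fin (R + 1) → 𝓧) : Set (𝓨 × 𝓨) :=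
  {p : 𝓨 × 𝓨 | 0 < pijD q x p.1 p.2}

/-- Joint density `p(x_{1:r}, y_{1:r})` of `Z_{1:r}`, built from the initial density `p0`
and the transition density `q`. -/
noncomputable def jointD (p0 : 𝓧 × 𝓨 → ℝ≥0∞) (q : 𝓧 × 𝓨 → 𝓧 × 𝓨 → ℝ≥0∞) {R : ℕ}
    (x : Fin (R + 1) → 𝓧) (y : Fin (R + 1) → 𝓨) : ℝ≥0∞ :=
  p0 (x 0, y 0) * ∏ k : Fin R, q (x k.succ, y k.succ) (x k.castSucc, y k.castSucc)

/-- Density `p(x_{1:r})` of the observations `X_{1:r}`. -/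
noncomputable def pXD (p0 : 𝓧 × 𝓨 → ℝ≥0∞) (q : 𝓧 × 𝓨 → 𝓧 × 𝓨 → ℝ≥0∞) {R : ℕ}
    (x : Fin (R + 1) → 𝓧) : ℝ≥0∞ :=
  ∑ y : Fin (R + 1) → 𝓨, jointD p0 q x y

/-- The set `Y*(x_{1:r}) = {(y_1, y_r) : ∃ y_{2:r-1}, p(x_{1:r}, y_{1:r}) > 0}`. -/
def Ystar (p0 : 𝓧 × 𝓨 → ℝ≥0∞) (q : 𝓧 × 𝓨 → 𝓧 × 𝓨 → ℝ≥0∞) {R : ℕ}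
    (x : Fin (R + 1) → 𝓧) : Set (𝓨 × 𝓨) :=
  {p : 𝓨 × 𝓨 | ∃ y : Fin (R + 1) → 𝓨,
    y 0 = p.1 ∧ y (Fin.last R) = p.2 ∧ 0 < jointD p0 q x y}

/-- Assumption **A1**: there is `r = R + 1 > 1` and a set `E ⊆ 𝓧^r` on which
`Y⁺(x_{1:r}) = Y⁺` is constant, nonempty, and a product set. -/
def Assumption1 (q : 𝓧 × 𝓨 → 𝓧 × 𝓨 → ℝ≥0∞) {R : ℕ} (E : Set (Fin (R + 1) → 𝓧))
    (Yp : Set (𝓨 × 𝓨)) : Prop :=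
  1 ≤ R ∧ Yp.Nonempty ∧ (∀ x ∈ E, Yplus q x = Yp) ∧
    Yp = (Prod.fst '' Yp) ×ˢ (Prod.snd '' Yp)

/-- Assumption **A2**: `ψ` is a maximal irreducibility measure for the chain,
`ψ(E_(1) × Y⁺_(1)) > 0` and `μ^{r-1}(E(x₁)) > 0` for all `x₁ ∈ E_(1)`. -/
def Assumption2 (κ : Kernel (𝓧 × 𝓨) (𝓧 × 𝓨)) (ψ : Measure (𝓧 × 𝓨)) (μ : Measure 𝓧)
    {R : ℕ} (E : Set (Fin (R + 1) → 𝓧)) (Yp : Set (𝓨 × 𝓨)) : Prop :=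
  IsMaxIrreducibilityMeasure κ ψ ∧
  0 < ψ (proj1 E ×ˢ (Prod.fst '' Yp)) ∧
  ∀ x₁ ∈ proj1 E, 0 < (Measure.pi fun _ : Fin R => μ) (secSet E x₁)

/-- Assumption **A1'** (stationary case): `Y*(x_{1:r}) = Y*` is constant on `E`,
nonempty and a product set. -/
def Assumption1' (p0 : 𝓧 × 𝓨 → ℝ≥0∞) (q : 𝓧 × 𝓨 → 𝓧 × 𝓨 → ℝ≥0∞) {R : ℕ}
    (E : Set (Fin (R + 1) → 𝓧)) (Ys : Set (𝓨 × 𝓨)) : Prop :=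
  1 ≤ R ∧ Ys.Nonempty ∧ (∀ x ∈ E, Ystar p0 q x = Ys) ∧
    Ys = (Prod.fst '' Ys) ×ˢ (Prod.snd '' Ys)

/-- Assumption **A2'**: `μ^r(E) > 0`. -/
def Assumption2' (μ : Measure 𝓧) {R : ℕ} (E : Set (Fin (R + 1) → 𝓧)) : Prop :=
  0 < (Measure.pi fun _ : Fin (R + 1) => μ) E

/-! ### Smoothing distributions -/

/-- The σ-algebra `σ(X_{l:n})` generated by the observations with indices in `[l, n]`. -/
noncomputable def obsSigma (Z : ℕ → Ω → 𝓧 × 𝓨) (l n : ℕ) : MeasurableSpace Ω :=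
  ⨆ i ∈ Set.Icc l n, MeasurableSpace.comap (fun ω => (Z i ω).1) inferInstance

/-- The σ-algebra `σ(X_{s:∞})` generated by the observations with indices `≥ s`. -/
noncomputable def obsSigmaFrom (Z : ℕ → Ω → 𝓧 × 𝓨) (s : ℕ) : MeasurableSpace Ω :=
  ⨆ i ∈ Set.Ici s, MeasurableSpace.comap (fun ω => (Z i ω).1) inferInstance

/-- The smoothing probability `ν^t_{l:n;m}(v) = P(Y_{t:t+m-1} = v | X_{l:n})`,
realized as a conditional expectation of an indicator. -/
noncomputable def smooth (P : Measure Ω) (Z : ℕ → Ω → 𝓧 × 𝓨) (t l n : ℕ) {m : ℕ}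
    (v : Fin m → 𝓨) : Ω → ℝ :=
  P[Set.indicator {ω | ∀ i : Fin m, (Z (t + (i : ℕ)) ω).2 = v i} (fun _ => (1 : ℝ)) |
    obsSigma Z l n]

/-- Total variation distance `‖ν^t_{l:n;m} − ν^t_{s:n;m}‖_TV`. -/
noncomputable def tvBlock (P : Measure Ω) (Z : ℕ → Ω → 𝓧 × 𝓨) (t l s n m : ℕ) (ω : Ω) : ℝ :=
  ∑ v : Fin m → 𝓨, |smooth P Z t l n v ω - smooth P Z t s n v ω|

/-- Two-sided version: the σ-algebra `σ(X_i ; i ∈ I)` for `I ⊆ ℤ`. -/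
noncomputable def obsSigmaZ (Z : ℤ → Ω → 𝓧 × 𝓨) (I : Set ℤ) : MeasurableSpace Ω :=
  ⨆ i ∈ I, MeasurableSpace.comap (fun ω => (Z i ω).1) inferInstance

/-- Two-sided smoothing probability `P(Y_{t:t+m-1} = v | X_i ; i ∈ I)`. -/
noncomputable def smoothZ (P : Measure Ω) (Z : ℤ → Ω → 𝓧 × 𝓨) (t : ℤ) (I : Set ℤ) {m : ℕ}
    (v : Fin m → 𝓨) : Ω → ℝ :=
  P[Set.indicator {ω | ∀ i : Fin m, (Z (t + (i : ℕ)) ω).2 = v i} (fun _ => (1 : ℝ)) |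
    obsSigmaZ Z I]

/-- Two-sided total variation distance between smoothing distributions with observation
index sets `I` and `J`. -/
noncomputable def tvBlockZ (P : Measure Ω) (Z : ℤ → Ω → 𝓧 × 𝓨) (t : ℤ) (I J : Set ℤ)
    (m : ℕ) (ω : Ω) : ℝ :=
  ∑ v : Fin m → 𝓨, |smoothZ P Z t I v ω - smoothZ P Z t J v ω|

/-! ### Counters, Doeblin matrices -/

/-- `κ_k(X_{s:t})`: the number of (almost non-overlapping) `E`-blocks of length `R+1`
in the observed string, counting from position `s + k` (paper's `κ_k`, `r' = R`). -/
noncomputable def kapCount (Z : ℕ → Ω → 𝓧 × 𝓨) {R : ℕ} (E : Set (Fin (R + 1) → 𝓧))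
    (s t kk : ℕ) (ω : Ω) : ℕ :=
  ∑ u ∈ Finset.range ((t - kk - s) / R),
    Set.indicator E (fun _ => 1) (fun i : Fin (R + 1) => (Z (u * R + s + kk + (i : ℕ)) ω).1)

/-- `κ̄(X_{s:t})`: the backward counter, counting `E`-blocks from position `t` backwards. -/
noncomputable def kapBar (Z : ℕ → Ω → 𝓧 × 𝓨) {R : ℕ} (E : Set (Fin (R + 1) → 𝓧))
    (s t : ℕ) (ω : Ω) : ℕ :=
  ∑ u ∈ Finset.range ((t - s) / R),
    Set.indicator E (fun _ => 1) (fun i : Fin (R + 1) => (Z (t - (u + 1) * R + (i : ℕ)) ω).1)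

open Classical in
/-- The segment `x_{a+1:b+1}` (0-based indices `a..b`) of a string of length `L+1`. -/
def segv {L : ℕ} (x : Fin (L + 1) → 𝓧) (a b : ℕ) (hab : a ≤ b) (hb : b ≤ L) :
    Fin (b - a + 1) → 𝓧 :=
  fun i => x ⟨a + (i : ℕ), by omega⟩

/-- Normalizing constant `c(x_{r:n}) = ∑_{j ∈ Y₂} p(x_{r+1:n} | x_r, y_r = j)`. -/
noncomputable def normC (q : 𝓧 × 𝓨 → 𝓧 × 𝓨 → ℝ≥0∞) (Y2 : Set 𝓨) {M : ℕ}
    (w : Fin (M + 1) → 𝓧) : ℝ≥0∞ :=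
  ∑ j : 𝓨, Set.indicator Y2 (fun j' => pxD q w j') j

/-- The probability vector `λ[x_{r:n}](j)`. -/
noncomputable def lamD (q : 𝓧 × 𝓨 → 𝓧 × 𝓨 → ℝ≥0∞) (Y2 : Set 𝓨) {M : ℕ}
    (w : Fin (M + 1) → 𝓧) (j : 𝓨) : ℝ≥0∞ :=
  Set.indicator Y2 (fun j' => pxD q w j') j / normC q Y2 w

/-- The matrix `U[x_{1:n}](i,j)`; a version of `P(Y_r = j | X_{1:n} = x_{1:n}, Y_1 = i)`. -/
noncomputable def UMat (q : 𝓧 × 𝓨 → 𝓧 × 𝓨 → ℝ≥0∞) (Y2 : Set 𝓨) {L R : ℕ} (hR : R ≤ L)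
    (x : Fin (L + 1) → 𝓧) (i j : 𝓨) : ℝ≥0∞ :=
  if 0 < pxD q x i then pmidD q x i ⟨R, by omega⟩ j / pxD q x i
  else lamD q Y2 (segv x R L hR (le_refl L)) j

/-! ### Total variation of measures, conditional laws of `Y_{t:∞}` -/

open Classical in
/-- Total variation distance between two measures (normalized as in the paper:
`‖P − Q‖_TV = 2 sup_A |P(A) − Q(A)|`). -/
noncomputable def tvDistM {W : Type*} [MeasurableSpace W] (ρ₁ ρ₂ : Measure W) : ℝ≥0∞ :=
  2 * ⨆ (A : Set W) (_ : MeasurableSet A), ((ρ₁ A - ρ₂ A) ⊔ (ρ₂ A - ρ₁ A))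

/-- The observation vector `X_{l:n}`. -/
def obsVec (Z : ℕ → Ω → 𝓧 × 𝓨) (l n : ℕ) (ω : Ω) : Fin (n + 1 - l) → 𝓧 :=
  fun i => (Z (l + (i : ℕ)) ω).1

/-- The tail signal process `Y_{t:∞}`. -/
def tailY (Z : ℕ → Ω → 𝓧 × 𝓨) (t : ℕ) (ω : Ω) : ℕ → 𝓨 :=
  fun k => (Z (t + k) ω).2

/-- The observation tail `X_{l:∞}`. -/
def obsTail (Z : ℕ → Ω → 𝓧 × 𝓨) (l : ℕ) (ω : Ω) : ℕ → 𝓧 :=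
  fun k => (Z (l + k) ω).1

/-- A regular version of the conditional distribution `P(Y_{t:∞} ∈ · | X_{l:n})`,
evaluated at `ω`. -/
noncomputable def condLawTail (P : Measure Ω) [IsFiniteMeasure P] (Z : ℕ → Ω → 𝓧 × 𝓨)
    (t l n : ℕ) (ω : Ω) : Measure (ℕ → 𝓨) :=
  condDistrib (tailY Z t) (obsVec Z l n) P (obsVec Z l n ω)

/-- A regular version of the conditional distribution `P(Y_{t:∞} ∈ · | X_{l:∞})`,
evaluated at `ω`. -/
noncomputable def condLawTailInf (P : Measure Ω) [IsFiniteMeasure P] (Z : ℕ → Ω → 𝓧 × 𝓨)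
    (t l : ℕ) (ω : Ω) : Measure (ℕ → 𝓨) :=
  condDistrib (tailY Z t) (obsTail Z l) P (obsTail Z l ω)

/-! ### Hidden Markov models and matrices -/

/-- Powers of a nonnegative matrix on `𝓨`. -/
noncomputable def matpow (p : 𝓨 → 𝓨 → ℝ≥0∞) : ℕ → 𝓨 → 𝓨 → ℝ≥0∞
  | 0 => fun i j => if i = j then 1 else 0
  | n + 1 => fun i j => ∑ k : 𝓨, matpow p n i k * p k j

/-- The sub-matrix `ℙ_C` of `p` with rows and columns restricted to `C` (and `0` outside). -/
noncomputable def subMat (p : 𝓨 → 𝓨 → ℝ≥0∞) (C : Set 𝓨) : 𝓨 → 𝓨 → ℝ≥0∞ :=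
  fun i j => Set.indicator (C ×ˢ C) (fun ij : 𝓨 × 𝓨 => p ij.1 ij.2) (i, j)

/-- Support `G_i = {x : f_i(x) > 0}` of the emission density `f_i`. -/
def emisSupp (f : 𝓨 → 𝓧 → ℝ≥0∞) (i : 𝓨) : Set 𝓧 :=
  {x | 0 < f i x}

/-- `C` is a cluster: `μ[(∩_{i∈C} G_i) \ (∪_{i∉C} G_i)] > 0`. -/
def IsCluster (μ : Measure 𝓧) (f : 𝓨 → 𝓧 → ℝ≥0∞) (C : Set 𝓨) : Prop :=
  0 < μ ((⋂ i ∈ C, emisSupp f i) \ (⋃ i ∈ Cᶜ, emisSupp f i))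

section AuxLemmas

lemma ennreal_sum_pos_iff {α : Type*} (s : Finset α) (f : α → ℝ≥0∞) :
    0 < ∑ a ∈ s, f a ↔ ∃ a ∈ s, f a ≠ 0 := by
  rw [pos_iff_ne_zero, Ne, Finset.sum_eq_zero_iff]
  push_neg
  rfl

lemma matpow_pos_path (p : 𝓨 → 𝓨 → ℝ≥0∞) :
    ∀ (n : ℕ) (i j : 𝓨), 0 < matpow p n i j →
      ∃ y : Fin (n + 1) → 𝓨, y 0 = i ∧ y (Fin.last n) = j ∧
        ∀ k : Fin n, 0 < p (y k.castSucc) (y k.succ) := by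
  intro n
  induction n with
  | zero =>
    intro i j hpos
    by_cases hij : i = j
    · exact ⟨fun _ => i, rfl, hij, fun k => k.elim0⟩
    · simp only [matpow, if_neg hij] at hpos
      exact absurd hpos (lt_irrefl 0)
  | succ n ih =>
    intro i j hpos
    simp only [matpow] at hpos
    obtain ⟨k, -, hk⟩ := (ennreal_sum_pos_iff _ _).1 hpos
    have h1 : 0 < matpow p n i k := pos_iff_ne_zero.2 fun h0 => hk (by simp [h0])
    have h2 : 0 < p k j := pos_iff_ne_zero.2 fun h0 => hk (by simp [h0])
    obtain ⟨y, hy0, hyl, hys⟩ := ih i k h1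
    refine ⟨Fin.snoc y j, ?_, Fin.snoc_last _ _, ?_⟩
    · have h00 : (0 : Fin (n + 2)) = Fin.castSucc 0 := rfl
      rw [h00, Fin.snoc_castSucc]; exact hy0
    · intro m
      refine Fin.lastCases ?_ ?_ m
      · rw [Fin.succ_last, Fin.snoc_last, Fin.snoc_castSucc, hyl]
        exact h2
      · intro mm
        rw [Fin.succ_castSucc, Fin.snoc_castSucc, Fin.snoc_castSucc]
        exact hys mm

lemma pijD_pos_iff' (q : 𝓧 × 𝓨 → 𝓧 × 𝓨 → ℝ≥0∞) {R : ℕ}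
    (x : Fin (R + 1) → 𝓧) (i j : 𝓨) :
    0 < pijD q x i j ↔ ∃ y : Fin (R + 1) → 𝓨, y 0 = i ∧ y (Fin.last R) = j ∧
      ∀ k : Fin R, q (x k.succ, y k.succ) (x k.castSucc, y k.castSucc) ≠ 0 := by
  rw [pijD, ennreal_sum_pos_iff]
  constructor
  · rintro ⟨y, -, hy⟩
    by_cases hcond : y 0 = i ∧ y (Fin.last R) = j
    · rw [if_pos hcond] at hy
      exact ⟨y, hcond.1, hcond.2, fun k =>
        Finset.prod_ne_zero_iff.1 hy k (Finset.mem_univ k)⟩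
    · rw [if_neg hcond] at hy
      exact absurd rfl hy
  · rintro ⟨y, h0, hl, hf⟩
    refine ⟨y, Finset.mem_univ y, ?_⟩
    rw [if_pos ⟨h0, hl⟩]
    exact Finset.prod_ne_zero_iff.2 fun k _ => hf k

lemma subMat_pos' {p : 𝓨 → 𝓨 → ℝ≥0∞} {C : Set 𝓨} {a b : 𝓨} (hpos : 0 < subMat p C a b) :
    a ∈ C ∧ b ∈ C ∧ 0 < p a b := by
  by_cases hm : (a, b) ∈ C ×ˢ C
  · refine ⟨hm.1, hm.2, ?_⟩
    rwa [subMat, Set.indicator_of_mem hm] at hpos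
  · rw [subMat, Set.indicator_of_notMem hm] at hpos
    exact absurd hpos (lt_irrefl 0)

end AuxLemmas

/-- Lemma 3. Let `Z` be a `ψ`-irreducible linear Markov switching model
on `𝓧 = ℝ^d` (Lebesgue measure, kernel density `q(x₂,j | x₁,i) = p_{ij} h_j(x₂ − F(j)x₁)`).
Suppose (i) there are `C ⊆ 𝓨` and `ε > 0` such that for `x ∈ B(0,ε)`, `h_i(x) > 0` iff
`i ∈ C`, and the sub-stochastic matrix `(p_{ij})_{i,j∈C}` is primitive; and (ii) with
`Y_C = {i : p_{ij} > 0 for some j ∈ C}`, there is `i₀ ∈ Y_C` with `(0, i₀) ∈ supp ψ`.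
Then `Z` satisfies **A1** and **A2**. -/
theorem linear_switching_A1_A2 {d : ℕ}
    (P : Measure Ω) (Z : ℕ → Ω → EuclideanSpace ℝ (Fin d) × 𝓨)
    (κ : Kernel (EuclideanSpace ℝ (Fin d) × 𝓨) (EuclideanSpace ℝ (Fin d) × 𝓨))
    (q : EuclideanSpace ℝ (Fin d) × 𝓨 → EuclideanSpace ℝ (Fin d) × 𝓨 → ℝ≥0∞)
    (p0 : EuclideanSpace ℝ (Fin d) × 𝓨 → ℝ≥0∞)
    (pm : 𝓨 → 𝓨 → ℝ≥0∞)
    (F : 𝓨 → EuclideanSpace ℝ (Fin d) →ₗ[ℝ] EuclideanSpace ℝ (Fin d))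
    (h : 𝓨 → EuclideanSpace ℝ (Fin d) → ℝ≥0∞)
    (ψ : Measure (EuclideanSpace ℝ (Fin d) × 𝓨))
    (hPMM : IsPMM P Z κ volume q p0)
    (hq : ∀ x₁ i x₂ j, q (x₂, j) (x₁, i) = pm i j * h j (x₂ - F j x₁))
    (hstoch : ∀ i : 𝓨, ∑ j : 𝓨, pm i j = 1)
    (hdens : ∀ j : 𝓨, ∫⁻ x, h j x = 1)
    (hmax : IsMaxIrreducibilityMeasure κ ψ)
    (C : Set 𝓨) (ε : ℝ) (hε : 0 < ε)
    (hC : ∀ x ∈ Metric.ball (0 : EuclideanSpace ℝ (Fin d)) ε, ∀ i : 𝓨, (0 < h i x ↔ i ∈ C))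
    (R : ℕ) (hR : 1 ≤ R)
    (hprim : ∀ i ∈ C, ∀ j ∈ C, 0 < matpow (subMat pm C) R i j)
    (i₀ : 𝓨) (hi₀ : ∃ j ∈ C, 0 < pm i₀ j)
    (hsupp : ∀ ε' : ℝ, 0 < ε' →
      0 < ψ (Metric.ball (0 : EuclideanSpace ℝ (Fin d)) ε' ×ˢ ({i₀} : Set 𝓨))) :
    ∃ (R' : ℕ) (E : Set (Fin (R' + 1) → EuclideanSpace ℝ (Fin d))) (Yp : Set (𝓨 × 𝓨)),
      Assumption1 q E Yp ∧ Assumption2 κ ψ volume E Yp := by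
  classical
  -- a uniform bound on the operator norms of the `F j`
  obtain ⟨M, hM0, hMb⟩ : ∃ M : ℝ, 0 ≤ M ∧
      ∀ (j : 𝓨) (v : EuclideanSpace ℝ (Fin d)), ‖F j v‖ ≤ M * ‖v‖ := by
    have hj : ∀ j : 𝓨, ∃ Mj : ℝ, 0 ≤ Mj ∧ ∀ v, ‖F j v‖ ≤ Mj * ‖v‖ := by
      intro j
      refine ⟨‖LinearMap.toContinuousLinearMap (F j)‖, norm_nonneg _, fun v => ?_⟩
      have hv := (LinearMap.toContinuousLinearMap (F j)).le_opNorm v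
      rwa [LinearMap.coe_toContinuousLinearMap'] at hv
    choose Mf hMf0 hMf using hj
    refine ⟨Finset.univ.sup' Finset.univ_nonempty Mf, ?_, fun j v => ?_⟩
    · obtain ⟨j⟩ := ‹Nonempty 𝓨›
      exact le_trans (hMf0 j) (Finset.le_sup' Mf (Finset.mem_univ j))
    · exact le_trans (hMf j v)
        (mul_le_mul_of_nonneg_right (Finset.le_sup' Mf (Finset.mem_univ j)) (norm_nonneg v))
  have hM1 : 0 < M + 1 := by linarith
  set δ : ℝ := ε / (M + 1) with hδdef
  have hδ : 0 < δ := div_pos hε hM1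
  have hδε : δ + M * δ = ε := by
    rw [hδdef]
    field_simp
    ring
  have hball : ∀ (j : 𝓨) (a b : EuclideanSpace ℝ (Fin d)),
      a ∈ Metric.ball (0 : EuclideanSpace ℝ (Fin d)) δ →
      b ∈ Metric.ball (0 : EuclideanSpace ℝ (Fin d)) δ →
      a - F j b ∈ Metric.ball (0 : EuclideanSpace ℝ (Fin d)) ε := by
    intro j a b ha hb
    rw [mem_ball_zero_iff] at ha hb ⊢
    calc ‖a - F j b‖ ≤ ‖a‖ + ‖F j b‖ := norm_sub_le _ _
      _ ≤ ‖a‖ + M * ‖b‖ := add_le_add_right (hMb j b) _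
      _ < δ + M * δ :=
          add_lt_add_of_lt_of_le ha (mul_le_mul_of_nonneg_left hb.le hM0)
      _ = ε := hδε
  set YC : Set 𝓨 := {i | ∃ j ∈ C, 0 < pm i j} with hYCdef
  obtain ⟨j₀, hj₀C, hj₀p⟩ := hi₀
  have hi₀YC : i₀ ∈ YC := ⟨j₀, hj₀C, hj₀p⟩
  set E : Set (Fin (R + 1 + 1) → EuclideanSpace ℝ (Fin d)) :=
    {x | ∀ k, x k ∈ Metric.ball (0 : EuclideanSpace ℝ (Fin d)) δ} with hEdef
  -- the key computation: `Y⁺(x) = Y_C × C` on `E`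
  have hYplus : ∀ x ∈ E, Yplus q x = YC ×ˢ C := by
    intro x hx
    ext ⟨i, j⟩
    simp only [Yplus, Set.mem_setOf_eq, Set.mem_prod]
    rw [pijD_pos_iff']
    constructor
    · rintro ⟨y, hy0, hyl, hf⟩
      have hCmem : ∀ k : Fin (R + 1), y k.succ ∈ C ∧ 0 < pm (y k.castSucc) (y k.succ) := by
        intro k
        have hfk := hf k
        rw [hq] at hfk
        have hpm : pm (y k.castSucc) (y k.succ) ≠ 0 := fun h0 => hfk (by rw [h0, zero_mul])
        have hh : h (y k.succ) (x k.succ - F (y k.succ) (x k.castSucc)) ≠ 0 :=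
          fun h0 => hfk (by rw [h0, mul_zero])
        refine ⟨?_, pos_iff_ne_zero.2 hpm⟩
        exact (hC _ (hball _ _ _ (hx k.succ) (hx k.castSucc)) _).1 (pos_iff_ne_zero.2 hh)
      constructor
      · have h0 := hCmem 0
        rw [Fin.castSucc_zero, hy0] at h0
        exact ⟨y (Fin.succ 0), h0.1, h0.2⟩
      · have hl := (hCmem (Fin.last R)).1
        rwa [Fin.succ_last, hyl] at hl
    · rintro ⟨⟨j₁, hj₁C, hj₁p⟩, hjC⟩
      obtain ⟨w, hw0, hwl, hws⟩ := matpow_pos_path (subMat pm C) R j₁ j (hprim j₁ hj₁C j hjC)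
      have hwC : ∀ m : Fin (R + 1), w m ∈ C := by
        intro m
        refine Fin.cases ?_ ?_ m
        · rw [hw0]; exact hj₁C
        · intro mm
          exact (subMat_pos' (hws mm)).2.1
      set y' : Fin (R + 1 + 1) → 𝓨 := Fin.cons i w with hy'
      refine ⟨y', by rw [hy', Fin.cons_zero], ?_, ?_⟩
      · rw [hy', ← Fin.succ_last, Fin.cons_succ]; exact hwl
      · intro k
        rw [hq]
        have hconsk : ∀ m : Fin (R + 1), y' m.succ = w m := by
          intro m; rw [hy', Fin.cons_succ]
        have hh : 0 < h (y' k.succ) (x k.succ - F (y' k.succ) (x k.castSucc)) := by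
          refine (hC _ (hball _ _ _ (hx k.succ) (hx k.castSucc)) _).2 ?_
          rw [hconsk k]; exact hwC k
        have hpm : 0 < pm (y' k.castSucc) (y' k.succ) := by
          refine Fin.cases ?_ ?_ k
          · rw [hconsk 0, Fin.castSucc_zero, hy', Fin.cons_zero, hw0]
            exact hj₁p
          · intro mm
            rw [hconsk mm.succ, ← Fin.succ_castSucc, hconsk mm.castSucc]
            exact (subMat_pos' (hws mm)).2.2
        exact mul_ne_zero hpm.ne' hh.ne'
  have hproj : proj1 E = Metric.ball (0 : EuclideanSpace ℝ (Fin d)) δ := by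
    ext a
    constructor
    · rintro ⟨x, hxE, rfl⟩; exact hxE 0
    · intro ha; exact ⟨fun _ => a, fun k => ha, rfl⟩
  refine ⟨R + 1, E, YC ×ˢ C, ⟨by omega, ⟨(i₀, j₀), hi₀YC, hj₀C⟩, hYplus, ?_⟩,
    hmax, ?_, ?_⟩
  · rw [Set.fst_image_prod _ ⟨j₀, hj₀C⟩, Set.snd_image_prod ⟨i₀, hi₀YC⟩]
  · refine lt_of_lt_of_le (hsupp δ hδ) (measure_mono ?_)
    rw [hproj]
    exact Set.prod_mono Set.Subset.rfl
      (Set.singleton_subset_iff.2 ⟨(i₀, j₀), ⟨hi₀YC, hj₀C⟩, rfl⟩)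
  · intro x₁ hx₁
    rw [hproj] at hx₁
    have hsec : Set.univ.pi
        (fun _ : Fin (R + 1) => Metric.ball (0 : EuclideanSpace ℝ (Fin d)) δ) ⊆
        secSet E x₁ := by
      intro xr hxr
      intro k
      refine Fin.cases ?_ ?_ k
      · rw [Fin.cons_zero]; exact hx₁
      · intro m; rw [Fin.cons_succ]; exact hxr m (Set.mem_univ m)
    refine lt_of_lt_of_le ?_ (measure_mono hsec)
    rw [Measure.pi_pi]
    refine pos_iff_ne_zero.2 (Finset.prod_ne_zero_iff.2 fun m _ => ?_)
    exact (Metric.measure_ball_pos volume 0 hδ).ne'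

end PMMPaper
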